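/- Let H be a complex Hilbert space, J a signature operator (J* = J, J² = I), W ∈ L(H) Krein-selfadjoint ((JW)* = JW), and S a closed subspace of H. Then the following are equivalent: (i) S is W-nonnegative in the Krein sense (⟨JWs, s⟩ ≥ 0 for all s ∈ S) and JW is S-weakly complementable; (ii) the set N^−(W, S^{[⊥]}) := {X ∈ L(H) : (JX)* = JX, X ≼ W, range(X) ⊆ J(S^⊥)} has a maximum element with respect to the Krein order ≼. In this case this maximum equals W_{/[S]} := J·(JW)_{/S}. -/

import Mathlib

open ContinuousLinearMap

noncomputable section

variable {H : Type*} [NormedAddCommGroup H] [InnerProductSpace ℂ H] [CompleteSpace H]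

/-- The orthogonal projection onto a closed subspace `S`, as an endomorphism of `H`. -/
def projL (S : Submodule ℂ H) [S.HasOrthogonalProjection] : H →L[ℂ] H :=
  S.subtypeL.comp S.orthogonalProjectionOnto

/-- The corner `a = P_S B P_S` of the block decomposition of `B` w.r.t. `H = S ⊕ Sᗮ`. -/
def blockA (B : H →L[ℂ] H) (S : Submodule ℂ H) [S.HasOrthogonalProjection] : H →L[ℂ] H :=
  projL S * B * projL S

/-- The corner `b = P_S B P_{Sᗮ}` of the block decomposition of `B` w.r.t. `H = S ⊕ Sᗮ`. -/
def blockB (B : H →L[ℂ] H) (S : Submodule ℂ H) [S.HasOrthogonalProjection] : H →L[ℂ] H :=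
  projL S * B * (1 - projL S)

/-- The corner `c = P_{Sᗮ} B P_{Sᗮ}` of the block decomposition of `B` w.r.t. `H = S ⊕ Sᗮ`. -/
def blockC (B : H →L[ℂ] H) (S : Submodule ℂ H) [S.HasOrthogonalProjection] : H →L[ℂ] H :=
  (1 - projL S) * B * (1 - projL S)

/-- `m = |a|^{1/2}`: `m` is the (unique) positive fourth root of `a⋆ a`. -/
def IsSqrtAbs (a m : H →L[ℂ] H) : Prop :=
  m.IsPositive ∧ m ^ 4 = adjoint a * a

/-- `B` is `S`-weakly complementable: `range b ⊆ range |a|^{1/2}`. -/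
def IsWeaklyComplementable (B : H →L[ℂ] H) (S : Submodule ℂ H)
    [S.HasOrthogonalProjection] : Prop :=
  ∃ m : H →L[ℂ] H, IsSqrtAbs (blockA B S) m ∧
    LinearMap.range (blockB B S : H →ₗ[ℂ] H) ≤ LinearMap.range (m : H →ₗ[ℂ] H)

/-- `B` is `S`-complementable: `H = S + B⁻¹(Sᗮ)`. -/
def IsComplementable (B : H →L[ℂ] H) (S : Submodule ℂ H) : Prop :=
  S ⊔ Sᗮ.comap (B : H →ₗ[ℂ] H) = ⊤

/-- The set `P(B,S)` of `B`-selfadjoint bounded idempotents onto `S`. -/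
def projSet (B : H →L[ℂ] H) (S : Submodule ℂ H) : Set (H →L[ℂ] H) :=
  {Q | Q * Q = Q ∧ LinearMap.range (Q : H →ₗ[ℂ] H) = S ∧ B * Q = adjoint Q * B}

/-- `Y` is the Schur complement `B_{/S} = [[0,0],[0, c - f⋆ u f]]`, where `f` is the reduced
solution of `b = |a|^{1/2} x` and `a = u |a|` is the polar decomposition of `a`. -/
def IsSchur (B : H →L[ℂ] H) (S : Submodule ℂ H) [S.HasOrthogonalProjection]
    (Y : H →L[ℂ] H) : Prop :=
  ∃ m u f : H →L[ℂ] H,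
    IsSqrtAbs (blockA B S) m ∧
    LinearMap.ker (u : H →ₗ[ℂ] H) = LinearMap.ker (blockA B S : H →ₗ[ℂ] H) ∧
    (∀ x ∈ (LinearMap.ker (blockA B S : H →ₗ[ℂ] H))ᗮ, ‖u x‖ = ‖x‖) ∧
    blockA B S = u * m ^ 2 ∧
    m * f = blockB B S ∧
    LinearMap.range (f : H →ₗ[ℂ] H) ≤ (LinearMap.range (m : H →ₗ[ℂ] H)).topologicalClosure ∧
    Y = blockC B S - adjoint f * (u * f)

/-- The set `M⁻(B,T)`. -/
def Mminus (B : H →L[ℂ] H) (T : Submodule ℂ H) : Set (H →L[ℂ] H) :=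
  {X | IsSelfAdjoint X ∧ (B - X).IsPositive ∧ LinearMap.range (X : H →ₗ[ℂ] H) ≤ T}

/-- The set `M⁺(B,T)`. -/
def Mplus (B : H →L[ℂ] H) (T : Submodule ℂ H) : Set (H →L[ℂ] H) :=
  {X | IsSelfAdjoint X ∧ (X - B).IsPositive ∧ LinearMap.range (X : H →ₗ[ℂ] H) ≤ T}

/-- `Y` is the Loewner maximum of `M`. -/
def IsMaxOf (M : Set (H →L[ℂ] H)) (Y : H →L[ℂ] H) : Prop :=
  Y ∈ M ∧ ∀ X ∈ M, (Y - X).IsPositive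

/-- `Z` is the Loewner minimum of `M`. -/
def IsMinOf (M : Set (H →L[ℂ] H)) (Z : H →L[ℂ] H) : Prop :=
  Z ∈ M ∧ ∀ X ∈ M, (X - Z).IsPositive

/-- `Z` is the greatest lower bound of `M` in the Loewner order on selfadjoint operators. -/
def IsGLBOf (M : Set (H →L[ℂ] H)) (Z : H →L[ℂ] H) : Prop :=
  IsSelfAdjoint Z ∧ (∀ X ∈ M, (X - Z).IsPositive) ∧
    ∀ F : H →L[ℂ] H, IsSelfAdjoint F → (∀ X ∈ M, (X - F).IsPositive) → (Z - F).IsPositive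

/-- `Y` is the least upper bound of `M` in the Loewner order on selfadjoint operators. -/
def IsLUBOf (M : Set (H →L[ℂ] H)) (Y : H →L[ℂ] H) : Prop :=
  IsSelfAdjoint Y ∧ (∀ X ∈ M, (Y - X).IsPositive) ∧
    ∀ F : H →L[ℂ] H, IsSelfAdjoint F → (∀ X ∈ M, (F - X).IsPositive) → (F - Y).IsPositive

/-- A decomposition `S = S₊ ⊕_B S₋` into a `B`-nonnegative and a `B`-nonpositive part. -/
def IsWDecomp (B : H →L[ℂ] H) (S Sp Sm : Submodule ℂ H) : Prop :=
  (∀ x ∈ Sp, ∀ y ∈ Sm, (inner ℂ x y : ℂ) = 0) ∧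
  Sp ⊔ Sm = S ∧
  (∀ x ∈ Sp, 0 ≤ (inner ℂ (B x) x : ℂ).re) ∧
  (∀ x ∈ Sm, (inner ℂ (B x) x : ℂ).re ≤ 0) ∧
  (∀ x ∈ Sp, ∀ y ∈ Sm, (inner ℂ (B x) y : ℂ) = 0)

/-- `Y` is Krein's shorted operator `B_{/T}` of the positive operator `B` to `T`:
the Loewner maximum of `{X : 0 ≤ X ≤ B, range X ⊆ Tᗮ}`. -/
def IsShort (B : H →L[ℂ] H) (T : Submodule ℂ H) (Y : H →L[ℂ] H) : Prop :=
  (Y.IsPositive ∧ (B - Y).IsPositive ∧ LinearMap.range (Y : H →ₗ[ℂ] H) ≤ Tᗮ) ∧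
    ∀ X : H →L[ℂ] H, X.IsPositive → (B - X).IsPositive → LinearMap.range (X : H →ₗ[ℂ] H) ≤ Tᗮ →
      (Y - X).IsPositive

/-- The set `{R⋆ Q⋆ B Q R : Q² = Q, N(Q) = T}`. -/
def comprSet2 (B R : H →L[ℂ] H) (T : Submodule ℂ H) : Set (H →L[ℂ] H) :=
  {X | ∃ Q : H →L[ℂ] H, Q * Q = Q ∧ LinearMap.ker (Q : H →ₗ[ℂ] H) = T ∧
    X = adjoint R * (adjoint Q * B * Q) * R}

/-- The set `{Q⋆ B Q : Q² = Q, N(Q) = S}`. -/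
def comprSet1 (B : H →L[ℂ] H) (S : Submodule ℂ H) : Set (H →L[ℂ] H) :=
  {X | ∃ Q : H →L[ℂ] H, Q * Q = Q ∧ LinearMap.ker (Q : H →ₗ[ℂ] H) = S ∧ X = adjoint Q * B * Q}

/-- The set `N⁻(W,T)` of the Krein space `(H, [x,y] = ⟨Jx,y⟩)`. -/
def Nminus (J W : H →L[ℂ] H) (T : Submodule ℂ H) : Set (H →L[ℂ] H) :=
  {X | IsSelfAdjoint (J * X) ∧ (J * (W - X)).IsPositive ∧ LinearMap.range (X : H →ₗ[ℂ] H) ≤ T}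

/-- The set `N⁺(W,T)` of the Krein space `(H, [x,y] = ⟨Jx,y⟩)`. -/
def Nplus (J W : H →L[ℂ] H) (T : Submodule ℂ H) : Set (H →L[ℂ] H) :=
  {X | IsSelfAdjoint (J * X) ∧ (J * (X - W)).IsPositive ∧ LinearMap.range (X : H →ₗ[ℂ] H) ≤ T}

/-- `Y` is the maximum of `M` in the Krein order induced by `J`. -/
def KMaxOf (J : H →L[ℂ] H) (M : Set (H →L[ℂ] H)) (Y : H →L[ℂ] H) : Prop :=
  Y ∈ M ∧ ∀ X ∈ M, (J * (Y - X)).IsPositive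

/-- `Z` is the minimum of `M` in the Krein order induced by `J`. -/
def KMinOf (J : H →L[ℂ] H) (M : Set (H →L[ℂ] H)) (Z : H →L[ℂ] H) : Prop :=
  Z ∈ M ∧ ∀ X ∈ M, (J * (X - Z)).IsPositive

/-- `E` is a densely defined projection (idempotent) with kernel `N`. -/
def IsDDProj (N : Submodule ℂ H) (E : H →ₗ.[ℂ] H) : Prop :=
  Dense (E.domain : Set H) ∧
  (∃ h : ∀ x : E.domain, E x ∈ E.domain, ∀ x : E.domain, E ⟨E x, h x⟩ = E x) ∧
  (LinearMap.ker E.toFun).map E.domain.subtype = N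

/-- `G` is the (everywhere defined, bounded) composition `E ∘ T`; in particular
`range T ⊆ dom E`. -/
def IsBddComp (E : H →ₗ.[ℂ] H) (T G : H →L[ℂ] H) : Prop :=
  ∃ h : ∀ x : H, T x ∈ E.domain, ∀ x : H, G x = E ⟨T x, h x⟩

set_option synthInstance.maxHeartbeats 1000000
set_option maxHeartbeats 1600000
set_option linter.unusedSectionVars false
namespace St16
variable {H : Type*} [NormedAddCommGroup H] [InnerProductSpace ℂ H] [CompleteSpace H]

lemma norm_sq_eq (T : H →L[ℂ] H) (x : H) :
    ‖T x‖ ^ 2 = ((inner ℂ ((adjoint T * T) x) x : ℂ)).re := by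
  rw [ContinuousLinearMap.mul_apply, adjoint_inner_left, inner_self_eq_norm_sq_to_K (𝕜 := ℂ)]
  norm_cast

section Proj
variable (S : Submodule ℂ H) [CompleteSpace S]

lemma projL_apply_mem (x : H) : projL S x ∈ S := (S.orthogonalProjectionOnto x).2

lemma projL_eq_self {s : H} (hs : s ∈ S) : projL S s = s :=
  Submodule.starProjection_eq_self_iff.mpr hs

lemma projL_eq_zero {z : H} (hz : z ∈ Sᗮ) : projL S z = 0 := by
  have : S.orthogonalProjectionOnto z = 0 :=
    Submodule.orthogonalProjectionOnto_apply_of_mem_orthogonal hz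
  simp [projL, this]

lemma projL_sa : IsSelfAdjoint (projL S) := isSelfAdjoint_starProjection S

lemma projL_idem : projL S * projL S = projL S := by
  ext x; exact projL_eq_self S (projL_apply_mem S x)

lemma one_sub_projL_mem (x : H) : (1 - projL S) x ∈ Sᗮ := by
  rw [sub_apply, ContinuousLinearMap.one_apply]
  exact Submodule.sub_starProjection_mem_orthogonal (K := S) x

end Proj

lemma eq_zero_of_mem_of_mem_orth {N : Submodule ℂ H} {x : H} (h1 : x ∈ N) (h2 : x ∈ Nᗮ) :
    x = 0 := by
  have := (Submodule.mem_orthogonal N x).mp h2 x h1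
  rwa [inner_self_eq_zero] at this

lemma inner_selfadj {m : H →L[ℂ] H} (hm : IsSelfAdjoint m) (x y : H) :
    (inner ℂ (m x) y : ℂ) = inner ℂ x (m y) := by
  rw [← adjoint_inner_left, hm.adjoint_eq]

lemma ker_eq_orth_range {m : H →L[ℂ] H} (hm : IsSelfAdjoint m) :
    LinearMap.ker (m : H →ₗ[ℂ] H) = (LinearMap.range (m : H →ₗ[ℂ] H))ᗮ := by
  ext x
  rw [LinearMap.mem_ker, ContinuousLinearMap.coe_coe, Submodule.mem_orthogonal]
  constructor
  · rintro hx u ⟨y, rfl⟩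
    rw [ContinuousLinearMap.coe_coe, inner_selfadj hm, hx, inner_zero_right]
  · intro h
    have h1 : (inner ℂ (m (m x)) x : ℂ) = 0 := h (m (m x)) ⟨m x, rfl⟩
    have h2 : (inner ℂ (m x) (m x) : ℂ) = 0 := (inner_selfadj hm (m x) x).symm.trans h1
    rwa [inner_self_eq_zero] at h2

lemma orth_ker_eq_closure_range {m : H →L[ℂ] H} (hm : IsSelfAdjoint m) :
    (LinearMap.ker (m : H →ₗ[ℂ] H))ᗮ = (LinearMap.range (m : H →ₗ[ℂ] H)).topologicalClosure := by
  rw [ker_eq_orth_range hm, Submodule.orthogonal_orthogonal_eq_closure]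

/-- Existence of the reduced solution of `m x = b` when `range b ⊆ range m`. -/
lemma reduced_solution {m b : H →L[ℂ] H} (hm : IsSelfAdjoint m)
    (hr : LinearMap.range (b : H →ₗ[ℂ] H) ≤ LinearMap.range (m : H →ₗ[ℂ] H)) :
    ∃ f : H →L[ℂ] H, m * f = b ∧
      LinearMap.range (f : H →ₗ[ℂ] H) ≤ (LinearMap.range (m : H →ₗ[ℂ] H)).topologicalClosure := by
  set N := LinearMap.ker (m : H →ₗ[ℂ] H) with hN
  haveI : CompleteSpace N := (ContinuousLinearMap.isClosed_ker m).completeSpace_coe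
  have hbx : ∀ x, b x ∈ LinearMap.range (m : H →ₗ[ℂ] H) := fun x => hr ⟨x, rfl⟩
  let g0 : H → H := fun x => (1 - projL N) ((hbx x).choose)
  have hg1 : ∀ x, g0 x ∈ Nᗮ := fun x => one_sub_projL_mem N _
  have hmN : ∀ z : H, z ∈ N → m z = 0 := fun z hz => hz
  have hg2 : ∀ x, m (g0 x) = b x := by
    intro x
    have h1 : m ((hbx x).choose) = b x := (hbx x).choose_spec
    have h2 : m (projL N ((hbx x).choose)) = 0 := hmN _ (projL_apply_mem N _)
    show m ((1 - projL N) _) = b x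
    rw [sub_apply, ContinuousLinearMap.one_apply, map_sub, h2, sub_zero, h1]
  have huniq : ∀ z1 z2 : H, z1 ∈ Nᗮ → z2 ∈ Nᗮ → m z1 = m z2 → z1 = z2 := by
    intro z1 z2 h1 h2 he
    have : z1 - z2 ∈ N := by
      rw [hN, LinearMap.mem_ker, ContinuousLinearMap.coe_coe, map_sub, he, sub_self]
    have h0 := eq_zero_of_mem_of_mem_orth this (Submodule.sub_mem _ h1 h2)
    rwa [sub_eq_zero] at h0
  let g : H →ₗ[ℂ] H :=
  { toFun := g0
    map_add' := by
      intro x y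
      apply huniq _ _ (hg1 _) (Submodule.add_mem _ (hg1 x) (hg1 y))
      rw [map_add, hg2, hg2, hg2, map_add]
    map_smul' := by
      intro c x
      simp only [RingHom.id_apply]
      apply huniq _ _ (hg1 _) (Submodule.smul_mem _ c (hg1 x))
      rw [map_smul, hg2, hg2, map_smul] }
  have hcont : Continuous g := by
    apply LinearMap.continuous_of_seq_closed_graph
    intro u x y hu hgu
    have h1 : Filter.Tendsto (fun n => m (g (u n))) Filter.atTop (nhds (m y)) :=
      (m.continuous.tendsto y).comp hgu
    have h2 : (fun n => m (g (u n))) = fun n => b (u n) := by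
      funext n; exact hg2 (u n)
    have h3 : Filter.Tendsto (fun n => b (u n)) Filter.atTop (nhds (b x)) :=
      (b.continuous.tendsto x).comp hu
    have hmy : m y = b x := by
      rw [h2] at h1
      exact tendsto_nhds_unique h1 h3
    have hyN : y ∈ Nᗮ := by
      have hcl : IsClosed (Nᗮ : Set H) := N.isClosed_orthogonal
      exact hcl.mem_of_tendsto hgu (Filter.Eventually.of_forall fun n => hg1 (u n))
    exact huniq y (g0 x) hyN (hg1 x) (by rw [hmy]; exact (hg2 x).symm)
  refine ⟨⟨g, hcont⟩, ?_, ?_⟩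
  · ext x; exact hg2 x
  · rintro y ⟨x, rfl⟩
    rw [← orth_ker_eq_closure_range hm]
    exact hg1 x

end St16
namespace St16
variable {H : Type*} [NormedAddCommGroup H] [InnerProductSpace ℂ H] [CompleteSpace H]

/-- Douglas-type factorization: if `‖A x‖ ≤ ‖m x‖` for all `x`, then `A` factors as `C * m`. -/
lemma factor_through (A m : H →L[ℂ] H) (h : ∀ x, ‖A x‖ ≤ ‖m x‖) :
    ∃ C : H →L[ℂ] H, C * m = A := by
  have hker : ∀ x y : H, m x = m y → A x = A y := by
    intro x y hxy
    have h2 := h (x - y)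
    rw [map_sub, map_sub, hxy, sub_self, norm_zero] at h2
    have := norm_nonneg (A x - A y)
    have h3 : ‖A x - A y‖ = 0 := le_antisymm h2 this
    rwa [norm_eq_zero, sub_eq_zero] at h3
  set R := LinearMap.range (m : H →ₗ[ℂ] H) with hR
  have hmem : ∀ x : H, m x ∈ R := fun x => ⟨x, rfl⟩
  have hch : ∀ u : R, m (Exists.choose u.2) = (u : H) := fun u => u.2.choose_spec
  let g0 : R →ₗ[ℂ] H :=
  { toFun := fun u => A (Exists.choose u.2)
    map_add' := by
      intro u v
      rw [← map_add]
      apply hker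
      rw [map_add, hch, hch, hch]; rfl
    map_smul' := by
      intro c u
      simp only [RingHom.id_apply]
      rw [← map_smul]
      apply hker
      rw [map_smul, hch, hch]; rfl }
  have hg0 : ∀ u : R, ‖g0 u‖ ≤ 1 * ‖u‖ := by
    intro u
    have := h (Exists.choose u.2)
    rw [hch] at this
    simpa [g0] using this
  let g : R →L[ℂ] H := g0.mkContinuous 1 hg0
  set K := R.topologicalClosure with hK
  haveI : CompleteSpace K := R.isClosed_topologicalClosure.completeSpace_coe
  let e : R →L[ℂ] K := (R.subtypeL).codRestrict K (fun u => R.le_topologicalClosure u.2)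
  have he_iso : Isometry e := by
    apply Isometry.of_dist_eq
    intro u v
    rfl
  have h_e : IsUniformInducing e := he_iso.isUniformInducing
  have h_dense : DenseRange e := by
    intro k
    rw [Metric.mem_closure_iff]
    intro ε hε
    have hk : (k : H) ∈ closure (R : Set H) := by
      rw [← Submodule.topologicalClosure_coe]
      exact k.2
    rw [Metric.mem_closure_iff] at hk
    obtain ⟨r, hr, hd⟩ := hk ε hε
    exact ⟨e ⟨r, hr⟩, ⟨⟨r, hr⟩, rfl⟩, by rw [Subtype.dist_eq]; exact hd⟩
  let C0 : K →L[ℂ] H := g.extend e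
  refine ⟨C0.comp (K.orthogonalProjectionOnto), ?_⟩
  ext x
  have hx : K.orthogonalProjectionOnto (m x) = ⟨m x, R.le_topologicalClosure (hmem x)⟩ := by
    exact Subtype.ext (Submodule.starProjection_eq_self_iff.mpr (R.le_topologicalClosure (hmem x)))
  have hx2 : (⟨m x, R.le_topologicalClosure (hmem x)⟩ : K) = e ⟨m x, hmem x⟩ := rfl
  rw [ContinuousLinearMap.mul_apply, comp_apply, hx, hx2, ContinuousLinearMap.extend_eq (f := g) h_dense h_e]
  show g0 _ = A x
  exact hker _ _ (hch ⟨m x, hmem x⟩)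

end St16
namespace St16
section Sqrt
variable {H : Type*} [NormedAddCommGroup H] [InnerProductSpace ℂ H] [CompleteSpace H]

lemma re_eq (z : ℂ) : RCLike.re z = z.re := rfl

lemma isPositive_iff_re {T : H →L[ℂ] H} (hT : IsSelfAdjoint T) :
    T.IsPositive ↔ ∀ x, 0 ≤ (inner ℂ (T x) x : ℂ).re := by
  constructor
  · intro h x
    have := h.2 x
    rwa [reApplyInnerSelf_apply, re_eq] at this
  · intro h
    exact ⟨hT.isSymmetric, fun x => by rw [reApplyInnerSelf_apply, re_eq]; exact h x⟩

lemma sqrt_isPositive {a : H →L[ℂ] H} : (CFC.sqrt a).IsPositive :=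
  (nonneg_iff_isPositive _).mp (CFC.sqrt_nonneg a)

lemma sqrt_mul_self {a : H →L[ℂ] H} (ha : a.IsPositive) :
    CFC.sqrt a * CFC.sqrt a = a := by
  have := CFC.sq_sqrt a ((nonneg_iff_isPositive a).mpr ha)
  rwa [pow_two] at this

lemma sqrt_unique4 {a m' : H →L[ℂ] H} (ha : a.IsPositive) (hm' : m'.IsPositive)
    (h4 : m' ^ 4 = adjoint a * a) : m' = CFC.sqrt a := by
  have ha' : (0 : H →L[ℂ] H) ≤ a := (nonneg_iff_isPositive a).mpr ha
  have hm'' : (0 : H →L[ℂ] H) ≤ m' := (nonneg_iff_isPositive m').mpr hm'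
  have hsq : (0 : H →L[ℂ] H) ≤ m' ^ 2 := by
    have h0 := star_mul_self_nonneg m'
    rwa [hm'.isSelfAdjoint.star_eq, ← pow_two] at h0
  have haa : adjoint a * a = a ^ 2 := by
    rw [ha.isSelfAdjoint.adjoint_eq, pow_two]
  have h2 : m' ^ 2 = a := by
    have e1 : CFC.sqrt ((m' ^ 2) ^ 2) = m' ^ 2 := CFC.sqrt_sq _ hsq
    have e3 : (m' ^ 2) ^ 2 = a ^ 2 := by rw [← pow_mul, h4, haa]
    rw [← e1, e3, CFC.sqrt_sq _ ha']
  rw [← h2]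
  exact (CFC.sqrt_sq m' hm'').symm

lemma ker_sqrt {a : H →L[ℂ] H} (ha : a.IsPositive) :
    LinearMap.ker ((CFC.sqrt a : H →L[ℂ] H) : H →ₗ[ℂ] H) = LinearMap.ker (a : H →ₗ[ℂ] H) := by
  have hmm := sqrt_mul_self ha
  have hsa := (sqrt_isPositive (a := a)).isSelfAdjoint
  ext x
  simp only [LinearMap.mem_ker, ContinuousLinearMap.coe_coe]
  constructor
  · intro hx
    have : a x = CFC.sqrt a (CFC.sqrt a x) := by rw [← ContinuousLinearMap.mul_apply, hmm]
    rw [this, hx, map_zero]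
  · intro hx
    have h1 : ‖CFC.sqrt a x‖ ^ 2 = ((inner ℂ (a x) x : ℂ)).re := by
      rw [norm_sq_eq, hsa.adjoint_eq, hmm]
    rw [hx, inner_zero_left] at h1
    simpa using h1

lemma closure_range_sqrt {a : H →L[ℂ] H} (ha : a.IsPositive) :
    (LinearMap.range ((CFC.sqrt a : H →L[ℂ] H) : H →ₗ[ℂ] H)).topologicalClosure
      = (LinearMap.range (a : H →ₗ[ℂ] H)).topologicalClosure := by
  rw [← orth_ker_eq_closure_range (sqrt_isPositive (a := a)).isSelfAdjoint,
    ← orth_ker_eq_closure_range ha.isSelfAdjoint, ker_sqrt ha]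

end Sqrt

section Blocks
variable {H : Type*} [NormedAddCommGroup H] [InnerProductSpace ℂ H] [CompleteSpace H]
variable {B : H →L[ℂ] H} (S : Submodule ℂ H) [CompleteSpace S]

lemma star_blockB (hB : IsSelfAdjoint B) :
    star (blockB B S) = (1 - projL S) * B * projL S := by
  simp [blockB, star_mul, star_sub, star_one, (projL_sa S).star_eq, hB.star_eq, mul_assoc]

lemma blockA_sa (hB : IsSelfAdjoint B) : IsSelfAdjoint (blockA B S) := by
  show star _ = _
  simp [blockA, star_mul, (projL_sa S).star_eq, hB.star_eq, mul_assoc]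

lemma blockC_sa (hB : IsSelfAdjoint B) : IsSelfAdjoint (blockC B S) := by
  show star _ = _
  simp [blockC, star_mul, star_sub, star_one, (projL_sa S).star_eq, hB.star_eq, mul_assoc]

lemma block_decomp (hB : IsSelfAdjoint B) :
    B = blockA B S + blockB B S + star (blockB B S) + blockC B S := by
  rw [star_blockB S hB]
  simp only [blockA, blockB, blockC]
  noncomm_ring

end Blocks
end St16
namespace St16
section Mm
variable {H : Type*} [NormedAddCommGroup H] [InnerProductSpace ℂ H] [CompleteSpace H]
variable {B X : H →L[ℂ] H} {S : Submodule ℂ H} [CompleteSpace S]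

lemma projL_mul_X (hX : IsSelfAdjoint X) (hr : LinearMap.range (X : H →ₗ[ℂ] H) ≤ Sᗮ) :
    projL S * X = 0 ∧ X * projL S = 0 := by
  have h1 : projL S * X = 0 := by
    ext x
    exact projL_eq_zero S (hr ⟨x, rfl⟩)
  have h2 : X * projL S = 0 := by
    have h3 := congrArg star h1
    rwa [star_mul, hX.star_eq, (projL_sa S).star_eq, star_zero] at h3
  exact ⟨h1, h2⟩

lemma nonneg_of_mem (hX : X ∈ Mminus B Sᗮ) : ∀ s ∈ S, 0 ≤ (inner ℂ (B s) s : ℂ).re := by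
  obtain ⟨hsa, hpos, hr⟩ := hX
  intro s hs
  have h0 : (inner ℂ (X s) s : ℂ) = 0 := by
    have h1 : X s ∈ Sᗮ := hr ⟨s, rfl⟩
    have h2 : (inner ℂ s (X s) : ℂ) = 0 := (Submodule.mem_orthogonal S (X s)).mp h1 s hs
    rw [← inner_conj_symm, h2, map_zero]
  have h3 := (isPositive_iff_re hpos.isSelfAdjoint).mp hpos s
  rw [sub_apply, inner_sub_left, Complex.sub_re, h0, Complex.zero_re, sub_zero] at h3
  exact h3

lemma blockA_sub (h1 : projL S * X = 0) : blockA (B - X) S = blockA B S := by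
  simp [blockA, mul_sub, sub_mul, ← mul_assoc, h1]

lemma blockB_sub (h1 : projL S * X = 0) : blockB (B - X) S = blockB B S := by
  simp [blockB, mul_sub, sub_mul, ← mul_assoc, h1]

lemma blockA_isPositive {D : H →L[ℂ] H} (hD : D.IsPositive) : (blockA D S).IsPositive := by
  have h := hD.conj_adjoint (projL S)
  have he : blockA D S = projL S ∘L D ∘L adjoint (projL S) := by
    rw [(projL_sa S).adjoint_eq]; rfl
  rwa [← he] at h

lemma blockC_isPositive {D : H →L[ℂ] H} (hD : D.IsPositive) : (blockC D S).IsPositive := by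
  have h := hD.conj_adjoint (1 - projL S)
  have hsa : IsSelfAdjoint (1 - projL S) := by
    show star _ = _
    rw [star_sub, star_one, (projL_sa S).star_eq]
  have he : blockC D S = (1 - projL S) ∘L D ∘L adjoint (1 - projL S) := by
    rw [hsa.adjoint_eq]; rfl
  rwa [← he] at h

/-- Membership in `Mminus` yields weak complementability data. -/
lemma wc_of_mem (hB : IsSelfAdjoint B) (hX : X ∈ Mminus B Sᗮ) :
    (blockA B S).IsPositive ∧
    LinearMap.range ((blockB B S) : H →ₗ[ℂ] H) ≤ LinearMap.range ((CFC.sqrt (blockA B S) : H →L[ℂ] H) : H →ₗ[ℂ] H) := by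
  obtain ⟨hsa, hpos, hr⟩ := hX
  obtain ⟨h1, h2⟩ := projL_mul_X (S := S) hsa hr
  set D := B - X with hD
  have haD : blockA D S = blockA B S := blockA_sub h1
  have hbD : blockB D S = blockB B S := blockB_sub h1
  have haPos : (blockA B S).IsPositive := haD ▸ blockA_isPositive hpos
  refine ⟨haPos, ?_⟩
  set a := blockA B S
  set m := CFC.sqrt a with hm
  have hmsa : IsSelfAdjoint m := sqrt_isPositive.isSelfAdjoint
  have hmm : m * m = a := sqrt_mul_self haPos
  set r := CFC.sqrt D with hrr
  have hrsa : IsSelfAdjoint r := sqrt_isPositive.isSelfAdjoint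
  have hrr2 : r * r = D := sqrt_mul_self hpos
  set P := projL S
  have hPsa := projL_sa S
  set A0 := r * P with hA0
  have hA0adj : adjoint A0 * A0 = a := by
    have : adjoint A0 = P * r := by
      rw [← star_eq_adjoint, star_mul, hrsa.star_eq, hPsa.star_eq]
    rw [this, hA0, show P * r * (r * P) = P * (r * r) * P from by noncomm_ring, hrr2, ← haD]
    rfl
  have hnorm : ∀ x, ‖A0 x‖ ≤ ‖m x‖ := by
    intro x
    have e1 : ‖A0 x‖ ^ 2 = ((inner ℂ (a x) x : ℂ)).re := by rw [norm_sq_eq, hA0adj]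
    have e2 : ‖m x‖ ^ 2 = ((inner ℂ (a x) x : ℂ)).re := by
      rw [norm_sq_eq, hmsa.adjoint_eq, hmm]
    have := (pow_left_inj₀ (norm_nonneg (A0 x)) (norm_nonneg (m x)) two_ne_zero).mp
      (e1.trans e2.symm)
    exact this.le
  obtain ⟨C, hC⟩ := factor_through A0 m hnorm
  have hCm : m * star C = P * r := by
    have h3 := congrArg star hC
    rwa [star_mul, hmsa.star_eq, hA0, star_mul, hrsa.star_eq, hPsa.star_eq] at h3
  have hb : blockB B S = m * (star C * (r * (1 - P))) := by
    rw [← hbD]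
    show P * D * (1 - P) = _
    rw [← hrr2, ← mul_assoc, ← mul_assoc, hCm]
    noncomm_ring
  rw [hb]
  rintro y ⟨x, rfl⟩
  exact ⟨(star C * (r * (1 - P))) x, rfl⟩

end Mm
end St16
namespace St16
section Schur
variable {H : Type*} [NormedAddCommGroup H] [InnerProductSpace ℂ H] [CompleteSpace H]
variable {B : H →L[ℂ] H} {S : Submodule ℂ H} [CompleteSpace S]

local notation "⟪" x ", " y "⟫" => (inner ℂ x y : ℂ)

lemma reduced_unique {m f1 f2 : H →L[ℂ] H} (hm : IsSelfAdjoint m) (h : m * f1 = m * f2)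
    (r1 : LinearMap.range (f1 : H →ₗ[ℂ] H) ≤ (LinearMap.range (m : H →ₗ[ℂ] H)).topologicalClosure)
    (r2 : LinearMap.range (f2 : H →ₗ[ℂ] H) ≤ (LinearMap.range (m : H →ₗ[ℂ] H)).topologicalClosure) : f1 = f2 := by
  ext x
  have h1 : f1 x - f2 x ∈ LinearMap.ker (m : H →ₗ[ℂ] H) := by
    rw [LinearMap.mem_ker, ContinuousLinearMap.coe_coe, map_sub, sub_eq_zero, ← ContinuousLinearMap.mul_apply, ← ContinuousLinearMap.mul_apply, h]
  have h2 : f1 x - f2 x ∈ (LinearMap.ker (m : H →ₗ[ℂ] H))ᗮ := by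
    rw [orth_ker_eq_closure_range hm]
    exact Submodule.sub_mem _ (r1 ⟨x, rfl⟩) (r2 ⟨x, rfl⟩)
  have := eq_zero_of_mem_of_mem_orth h1 h2
  rwa [sub_eq_zero] at this

lemma schur_max (hB : IsSelfAdjoint B)
    (ha : (blockA B S).IsPositive)
    (hw : LinearMap.range ((blockB B S) : H →ₗ[ℂ] H) ≤ LinearMap.range ((CFC.sqrt (blockA B S) : H →L[ℂ] H) : H →ₗ[ℂ] H)) :
    ∃ Z f : H →L[ℂ] H,
      CFC.sqrt (blockA B S) * f = blockB B S ∧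
      LinearMap.range (f : H →ₗ[ℂ] H) ≤ (LinearMap.range ((CFC.sqrt (blockA B S) : H →L[ℂ] H) : H →ₗ[ℂ] H)).topologicalClosure ∧
      Z = blockC B S - adjoint f * f ∧
      IsMaxOf (Mminus B Sᗮ) Z := by
  set P := projL S with hPdef
  set Q : H →L[ℂ] H := 1 - P with hQdef
  set a := blockA B S with hadef
  set b := blockB B S with hbdef
  set c := blockC B S with hcdef
  set m := CFC.sqrt a with hmdef
  have hPsa := projL_sa S
  have hQsa : IsSelfAdjoint Q := by
    show star _ = _
    rw [hQdef, star_sub, star_one, hPsa.star_eq]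
  have hmsa : IsSelfAdjoint m := sqrt_isPositive.isSelfAdjoint
  have hmm : m * m = a := sqrt_mul_self ha
  obtain ⟨f, hmf, hfr⟩ := reduced_solution hmsa hw
  have hcsa : IsSelfAdjoint c := blockC_sa S hB
  -- f kills S
  have hbP : b * P = 0 := by
    rw [hbdef]
    show P * B * (1 - P) * P = 0
    rw [mul_assoc, sub_mul, one_mul, projL_idem, sub_self, mul_zero]
  have hfP : f * P = 0 := by
    ext x
    show f (P x) = 0
    have hk : f (P x) ∈ LinearMap.ker (m : H →ₗ[ℂ] H) := by
      rw [LinearMap.mem_ker, ContinuousLinearMap.coe_coe]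
      have e0 : m (f (P x)) = (m * f * P) x := rfl
      rw [e0, hmf, hbP, ContinuousLinearMap.zero_apply]
    have ho : f (P x) ∈ (LinearMap.ker (m : H →ₗ[ℂ] H))ᗮ := by
      rw [orth_ker_eq_closure_range hmsa]
      exact hfr ⟨P x, rfl⟩
    exact eq_zero_of_mem_of_mem_orth hk ho
  set Z := c - star f * f with hZdef
  have hZsa : IsSelfAdjoint Z := by
    show star _ = _
    rw [hZdef, star_sub, hcsa.star_eq, star_mul, star_star]
  have hstarb : star f * m = star b := by
    rw [← hmf, star_mul, hmsa.star_eq]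
  -- B - Z = star (m + f) * (m + f)
  have hBZ : B - Z = star (m + f) * (m + f) := by
    have e1 : star (m + f) * (m + f) = a + b + star b + star f * f := by
      rw [star_add, hmsa.star_eq, add_mul, mul_add, mul_add, hmm, hmf, hstarb]
      abel
    rw [e1, hZdef]
    nth_rewrite 1 [block_decomp S hB]
    rw [← hadef, ← hbdef, ← hcdef]
    abel
  have hBZpos : (B - Z).IsPositive := by
    rw [hBZ]
    exact (nonneg_iff_isPositive _).mp (star_mul_self_nonneg _)
  -- range Z ≤ Sᗮ
  have hfQ : f * Q = f := by rw [hQdef, mul_sub, mul_one, hfP, sub_zero]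
  have hQZ : Q * Z = Z := by
    have hQQ : Q * Q = Q := by
      rw [hQdef]
      show (1 - P) * (1 - P) = 1 - P
      rw [sub_mul, one_mul, mul_sub, mul_one, projL_idem]
      abel
    have h1 : Q * c = c := by
      rw [hcdef]
      show Q * ((1 - P) * B * (1 - P)) = _
      rw [← hQdef, ← mul_assoc, ← mul_assoc, hQQ]
      rfl
    have h2 : Q * star f = star f := by
      rw [← hQsa.star_eq, ← star_mul, hfQ]
    rw [hZdef, mul_sub, h1, ← mul_assoc, h2]
  have hZr : LinearMap.range (Z : H →ₗ[ℂ] H) ≤ Sᗮ := by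
    rintro y ⟨x, rfl⟩
    have : Z x = (1 - P) (Z x) := by
      conv_lhs => rw [← hQZ]
      rfl
    rw [ContinuousLinearMap.coe_coe, this]
    exact one_sub_projL_mem S (Z x)
  refine ⟨Z, f, hmf, hfr, by rw [hZdef, ← star_eq_adjoint], ⟨⟨hZsa, hBZpos, hZr⟩, ?_⟩⟩
  -- maximality
  rintro X ⟨hXsa, hXpos, hXr⟩
  obtain ⟨hPX, hXP⟩ := projL_mul_X (S := S) hXsa hXr
  refine (isPositive_iff_re (hZsa.sub hXsa)).mpr ?_
  intro y
  apply le_of_forall_pos_le_add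
  intro ε hε
  -- approximate -f y by m w
  have hmem : -(f y) ∈ closure (Set.range m) := by
    have h1 : f y ∈ (LinearMap.range (m : H →ₗ[ℂ] H)).topologicalClosure := hfr ⟨y, rfl⟩
    have h2 : -(f y) ∈ (LinearMap.range (m : H →ₗ[ℂ] H)).topologicalClosure :=
      Submodule.neg_mem _ h1
    have h3 : -(f y) ∈ (((LinearMap.range (m : H →ₗ[ℂ] H)).topologicalClosure : Submodule ℂ H) : Set H) := h2
    rwa [Submodule.topologicalClosure_coe, LinearMap.coe_range] at h3
  obtain ⟨u, ⟨w, rfl⟩, hdist⟩ :=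
    Metric.mem_closure_iff.mp hmem (Real.sqrt ε) (Real.sqrt_pos.mpr hε)
  set u0 := P w + Q y with hu0
  -- X-related computations
  have hXy : X y ∈ Sᗮ := hXr ⟨y, rfl⟩
  have hXPv : ∀ v : H, ⟪X y, P v⟫ = 0 := by
    intro v
    have h1 : ⟪P v, X y⟫ = 0 := (Submodule.mem_orthogonal S (X y)).mp hXy _ (projL_apply_mem S v)
    rw [← inner_conj_symm, h1, map_zero]
  have hXu : X u0 = X y := by
    have e1 : X (P w) = (X * P) w := rfl
    have e2 : X (P y) = (X * P) y := rfl
    rw [hu0, map_add, e1, hXP, ContinuousLinearMap.zero_apply, zero_add]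
    show X (y - P y) = X y
    rw [map_sub, e2, hXP, ContinuousLinearMap.zero_apply, sub_zero]
  have hXinner : ⟪X u0, u0⟫ = ⟪X y, y⟫ := by
    rw [hXu, hu0, inner_add_right, hXPv w]
    show 0 + ⟪X y, y - P y⟫ = ⟪X y, y⟫
    rw [inner_sub_right, hXPv y, zero_add, sub_zero]
  -- B-related computations
  have eT1 : ⟪B (P w), P w⟫ = ⟪m w, m w⟫ := by
    rw [← inner_selfadj hPsa (B (P w)) w]
    have h5 : P (B (P w)) = m (m w) := by
      show a w = (m * m) w
      rw [hmm]
    rw [h5, inner_selfadj hmsa (m w) w]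
  have eT3 : ⟪B (Q y), P w⟫ = ⟪f y, m w⟫ := by
    rw [← inner_selfadj hPsa (B (Q y)) w]
    have h6 : P (B (Q y)) = m (f y) := by
      show b y = (m * f) y
      rw [hmf]
    rw [h6, inner_selfadj hmsa (f y) w]
  have eT2 : ⟪B (P w), Q y⟫ = (starRingEnd ℂ) ⟪f y, m w⟫ := by
    rw [inner_selfadj hB (P w) (Q y), ← inner_conj_symm, eT3]
  have eT4 : ⟪B (Q y), Q y⟫ = ⟪c y, y⟫ := by
    rw [← inner_selfadj hQsa (B (Q y)) y]
    rfl
  have hBinner : (⟪B u0, u0⟫).re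
      = ‖m w‖ ^ 2 + 2 * (⟪f y, m w⟫).re + (⟪c y, y⟫).re := by
    rw [hu0, map_add, inner_add_left, inner_add_right, inner_add_right,
      eT1, eT2, eT3, eT4]
    have h7 : ⟪m w, m w⟫ = (‖m w‖ : ℂ) ^ 2 := inner_self_eq_norm_sq_to_K (m w)
    rw [h7]
    simp only [← Complex.ofReal_pow, Complex.add_re, Complex.conj_re, Complex.ofReal_re]
    ring
  -- positivity of B - X at u0
  have hkey := (isPositive_iff_re hXpos.isSelfAdjoint).mp hXpos u0
  rw [sub_apply, inner_sub_left, Complex.sub_re, hBinner, hXinner] at hkey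
  -- norm manipulation
  have hre_sym : (⟪m w, f y⟫).re = (⟪f y, m w⟫).re := by
    rw [← inner_conj_symm, Complex.conj_re]
  have hnorm_add : ‖m w + f y‖ ^ 2
      = ‖m w‖ ^ 2 + 2 * (⟪f y, m w⟫).re + ‖f y‖ ^ 2 := by
    have := norm_add_sq (𝕜 := ℂ) (m w) (f y)
    rw [re_eq, hre_sym] at this
    linarith
  have hdist' : ‖m w + f y‖ ^ 2 ≤ ε := by
    have h8 : ‖m w + f y‖ = dist (-(f y)) (m w) := by
      rw [dist_eq_norm]
      rw [show -(f y) - m w = -(m w + f y) by abel, norm_neg]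
    have h9 : ‖m w + f y‖ ≤ Real.sqrt ε := by rw [h8]; exact hdist.le
    calc ‖m w + f y‖ ^ 2 ≤ Real.sqrt ε ^ 2 := by
          apply pow_le_pow_left₀ (norm_nonneg _) h9
      _ = ε := Real.sq_sqrt hε.le
  -- value of Z at y
  have hZinner : (⟪Z y, y⟫).re = (⟪c y, y⟫).re - ‖f y‖ ^ 2 := by
    have e1 : Z y = c y - (star f) (f y) := rfl
    have e2 : ⟪(star f) (f y), y⟫ = ⟪f y, f y⟫ := by
      rw [star_eq_adjoint, adjoint_inner_left]
    have e3 : ⟪f y, f y⟫ = (‖f y‖ : ℂ) ^ 2 := inner_self_eq_norm_sq_to_K (f y)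
    rw [e1, inner_sub_left, Complex.sub_re, e2, e3]
    simp only [← Complex.ofReal_pow, Complex.ofReal_re]
  have hfinal : (⟪(Z - X) y, y⟫).re = (⟪Z y, y⟫).re - (⟪X y, y⟫).re := by
    rw [sub_apply, inner_sub_left, Complex.sub_re]
  rw [hfinal, hZinner]
  linarith

end Schur
end St16
namespace St16
section Krein
variable {H : Type*} [NormedAddCommGroup H] [InnerProductSpace ℂ H] [CompleteSpace H]
variable {J W : H →L[ℂ] H} {S : Submodule ℂ H} [CompleteSpace S]

lemma mem_closure_range {T : H →L[ℂ] H} {v : H}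
    (h : v ∈ (LinearMap.range (T : H →ₗ[ℂ] H)).topologicalClosure) : v ∈ closure (Set.range ⇑T) := by
  have h3 : v ∈ (((LinearMap.range (T : H →ₗ[ℂ] H)).topologicalClosure : Submodule ℂ H) : Set H) := h
  rwa [Submodule.topologicalClosure_coe, LinearMap.coe_range] at h3

lemma JJ_apply (hJ2 : J * J = 1) (x : H) : J (J x) = x := by
  have h : (J * J) x = (1 : H →L[ℂ] H) x := by rw [hJ2]
  simpa using h

lemma J_cancel (hJ2 : J * J = 1) (X : H →L[ℂ] H) : J * (J * X) = X := by
  rw [← mul_assoc, hJ2, one_mul]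

lemma mem_map_iff (hJ2 : J * J = 1) (T : Submodule ℂ H) (x : H) :
    x ∈ T.map (J : H →ₗ[ℂ] H) ↔ J x ∈ T := by
  constructor
  · rintro ⟨z, hz, rfl⟩
    rwa [ContinuousLinearMap.coe_coe, JJ_apply hJ2]
  · intro h
    exact ⟨J x, h, JJ_apply hJ2 x⟩

lemma range_le_iff (hJ2 : J * J = 1) (X : H →L[ℂ] H) (T : Submodule ℂ H) :
    LinearMap.range (X : H →ₗ[ℂ] H) ≤ T.map (J : H →ₗ[ℂ] H) ↔ LinearMap.range ((J * X) : H →ₗ[ℂ] H) ≤ T := by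
  constructor
  · rintro h y ⟨x, rfl⟩
    exact (mem_map_iff hJ2 T (X x)).mp (h ⟨x, rfl⟩)
  · rintro h y ⟨x, rfl⟩
    exact (mem_map_iff hJ2 T (X x)).mpr (h ⟨x, rfl⟩)

lemma mem_Nminus_iff (hJ2 : J * J = 1) (X : H →L[ℂ] H) :
    X ∈ Nminus J W (Sᗮ.map (J : H →ₗ[ℂ] H)) ↔ (J * X) ∈ Mminus (J * W) Sᗮ := by
  unfold Nminus Mminus
  simp only [Set.mem_setOf_eq]
  constructor
  · rintro ⟨h1, h2, h3⟩
    refine ⟨h1, ?_, (range_le_iff hJ2 X Sᗮ).mp h3⟩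
    rwa [mul_sub] at h2
  · rintro ⟨h1, h2, h3⟩
    refine ⟨h1, ?_, (range_le_iff hJ2 X Sᗮ).mpr h3⟩
    rwa [mul_sub]

lemma kmax_iff (hJ2 : J * J = 1) (Y : H →L[ℂ] H) :
    KMaxOf J (Nminus J W (Sᗮ.map (J : H →ₗ[ℂ] H))) Y ↔ IsMaxOf (Mminus (J * W) Sᗮ) (J * Y) := by
  unfold KMaxOf IsMaxOf
  constructor
  · rintro ⟨h1, h2⟩
    refine ⟨(mem_Nminus_iff hJ2 Y).mp h1, ?_⟩
    intro X' hX'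
    have hmem : (J * X') ∈ Nminus J W (Sᗮ.map (J : H →ₗ[ℂ] H)) :=
      (mem_Nminus_iff hJ2 _).mpr (by rwa [J_cancel hJ2])
    have h4 := h2 (J * X') hmem
    rwa [mul_sub, J_cancel hJ2] at h4
  · rintro ⟨h1, h2⟩
    refine ⟨(mem_Nminus_iff hJ2 Y).mpr h1, ?_⟩
    intro X hX
    have h4 := h2 (J * X) ((mem_Nminus_iff hJ2 X).mp hX)
    rwa [← mul_sub] at h4

lemma blockA_isPositive_of_nonneg {B : H →L[ℂ] H} (hB : IsSelfAdjoint B)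
    (h : ∀ s ∈ S, 0 ≤ (inner ℂ (B s) s : ℂ).re) : (blockA B S).IsPositive := by
  refine (isPositive_iff_re (blockA_sa S hB)).mpr ?_
  intro x
  have e : (inner ℂ (blockA B S x) x : ℂ) = inner ℂ (B (projL S x)) (projL S x) := by
    have e1 : blockA B S x = projL S (B (projL S x)) := rfl
    rw [e1, inner_selfadj (projL_sa S)]
  rw [e]
  exact h _ (projL_apply_mem S x)

lemma sqrt_isSqrtAbs {a : H →L[ℂ] H} (ha : a.IsPositive) : IsSqrtAbs a (CFC.sqrt a) := by
  refine ⟨sqrt_isPositive, ?_⟩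
  have h2 : CFC.sqrt a ^ 2 = a := CFC.sq_sqrt a ((nonneg_iff_isPositive a).mpr ha)
  rw [show (4 : ℕ) = 2 * 2 from rfl, pow_mul, h2, ha.isSelfAdjoint.adjoint_eq, pow_two]

end Krein
end St16
/-- `S` is `W`-nonnegative (in the Krein sense) and `JW` is `S`-weakly complementable iff
`N⁻(W, S^{[⊥]})` has a Krein-order maximum; in that case the maximum is `W_{/[S]} = J(JW)_{/S}`. -/
theorem stmt_16 (J W : H →L[ℂ] H) (hJ : IsSelfAdjoint J) (hJ2 : J * J = 1)
    (hW : IsSelfAdjoint (J * W)) (S : Submodule ℂ H) [CompleteSpace S] :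
    (((∀ s ∈ S, 0 ≤ (inner ℂ ((J * W) s) s : ℂ).re) ∧ IsWeaklyComplementable (J * W) S) ↔
      ∃ Y, KMaxOf J (Nminus J W (Sᗮ.map (J : H →ₗ[ℂ] H))) Y) ∧
    (∀ Y, KMaxOf J (Nminus J W (Sᗮ.map (J : H →ₗ[ℂ] H))) Y → ∀ Z, IsSchur (J * W) S Z → Y = J * Z) := by
  constructor
  · constructor
    · rintro ⟨hpos, hwc⟩
      have ha : (blockA (J * W) S).IsPositive := St16.blockA_isPositive_of_nonneg hW hpos
      obtain ⟨m', ⟨hm'pos, hm'4⟩, hm'r⟩ := hwc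
      have hm'eq : m' = CFC.sqrt (blockA (J * W) S) := St16.sqrt_unique4 ha hm'pos hm'4
      rw [hm'eq] at hm'r
      obtain ⟨Z, f, _, _, _, hmax⟩ := St16.schur_max hW ha hm'r
      refine ⟨J * Z, ?_⟩
      rw [St16.kmax_iff hJ2, St16.J_cancel hJ2]
      exact hmax
    · rintro ⟨Y, hY⟩
      have hmax := (St16.kmax_iff hJ2 Y).mp hY
      have hmem := hmax.1
      have h1 := St16.nonneg_of_mem hmem
      obtain ⟨haPos, hrange⟩ := St16.wc_of_mem hW hmem
      exact ⟨h1, ⟨CFC.sqrt (blockA (J * W) S), St16.sqrt_isSqrtAbs haPos, hrange⟩⟩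
  · intro Y hY Z hZ
    have hmax := (St16.kmax_iff hJ2 Y).mp hY
    have hmem := hmax.1
    obtain ⟨haPos, hrange⟩ := St16.wc_of_mem hW hmem
    obtain ⟨Z0, f0, hf01, hf02, hf03, hmax0⟩ := St16.schur_max hW haPos hrange
    have huniq : J * Y = Z0 := by
      have p1 : (J * Y - Z0).IsPositive := hmax.2 Z0 hmax0.1
      have p2 : (Z0 - (J * Y)).IsPositive := hmax0.2 (J * Y) hmem
      exact le_antisymm ((le_def _ _).mpr p2) ((le_def _ _).mpr p1)
    obtain ⟨m', u', f', ⟨hm'pos, hm'4⟩, hku, hiso, hau, hmf', hrf', hZdef⟩ := hZ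
    have hm'eq : m' = CFC.sqrt (blockA (J * W) S) := St16.sqrt_unique4 haPos hm'pos hm'4
    rw [hm'eq] at hmf' hrf' hau
    have hsq : CFC.sqrt (blockA (J * W) S) ^ 2 = blockA (J * W) S :=
      CFC.sq_sqrt _ ((nonneg_iff_isPositive _).mpr haPos)
    rw [hsq] at hau
    have hu'f : u' * f' = f' := by
      ext x
      show u' (f' x) = f' x
      have hfx : f' x ∈ closure (Set.range ⇑(blockA (J * W) S)) := by
        have h5 := hrf' ⟨x, rfl⟩
        rw [St16.closure_range_sqrt haPos] at h5
        exact St16.mem_closure_range h5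
      have hsub : Set.range ⇑(blockA (J * W) S) ⊆ {v | u' v = v} := by
        rintro v ⟨x', rfl⟩
        show u' (blockA (J * W) S x') = blockA (J * W) S x'
        conv_lhs => rw [← ContinuousLinearMap.mul_apply, ← hau]
      have hcl : IsClosed {v | u' v = v} := isClosed_eq u'.continuous continuous_id
      exact closure_minimal hsub hcl hfx
    have hf'f0 : f' = f0 := by
      refine St16.reduced_unique (St16.sqrt_isPositive.isSelfAdjoint) ?_ hrf' hf02
      rw [hmf', hf01]
    have hZZ0 : Z = Z0 := by
      rw [hZdef, hu'f, hf'f0, hf03]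
    rw [hZZ0, ← huniq, St16.J_cancel hJ2]
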